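/- arXiv:1011.2989 — 3 statements merged into one kernel-verified Lean document; each statement's English description precedes it below -/
import Mathlib

section
/- Let A be an n×n real matrix, τ ∈ ℝ, let M : ℕ → ℝⁿ, z : ℕ → ℝ, ẑ : ℤ → ℝ (with ẑ(k) ≠ 0 for all k) and E : ℕ → ℝⁿ satisfy the recursion E(k+1) = exp(τA)·E(k) + (z(k)/ẑ(k−1) − 1)·M(k+1). Assume that the operator norm of exp(τA) is strictly less than 1 and that ẑ(k−1) = z(k) for every k ≥ k₀. Then for every n ≥ 0, ‖E(k₀+n)‖ ≤ ‖exp(τA)‖ⁿ · ‖E(k₀)‖, and consequently E(k₀+n) → 0 as n → ∞, regardless of the value of E(k₀). -/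
open Matrix Filter

set_option synthInstance.maxHeartbeats 1000000 in
/-- **Exponential error decay.**
If the operator norm (induced by the Euclidean norm) of `exp (τ A)` is `< 1` and the
detection is correct from time `k₀` onwards, then `‖E (k₀+n)‖ ≤ ‖exp (τ A)‖ⁿ ⬝ ‖E k₀‖`
and `E (k₀+n) → 0`, regardless of the initial error `E k₀`. -/
theorem one_state_error_decay_to_zero
    {n : ℕ} (A : Matrix (Fin n) (Fin n) ℝ) (τ : ℝ)
    (M : ℕ → EuclideanSpace ℝ (Fin n)) (z : ℕ → ℝ) (zhat : ℤ → ℝ)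
    (hzhat : ∀ k : ℤ, zhat k ≠ 0)
    (E : ℕ → EuclideanSpace ℝ (Fin n))
    (hE : ∀ k : ℕ,
      E (k + 1) = Matrix.toEuclideanCLM (𝕜 := ℝ) (NormedSpace.exp (τ • A)) (E k)
        + (z k / zhat ((k : ℤ) - 1) - 1) • M (k + 1))
    (hnorm : ‖Matrix.toEuclideanCLM (𝕜 := ℝ) (NormedSpace.exp (τ • A))‖ < 1)
    (k₀ : ℕ)
    (hdet : ∀ k : ℕ, k₀ ≤ k → zhat ((k : ℤ) - 1) = z k) :
    (∀ m : ℕ, ‖E (k₀ + m)‖ ≤ ‖Matrix.toEuclideanCLM (𝕜 := ℝ) (NormedSpace.exp (τ • A))‖ ^ m * ‖E k₀‖)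
      ∧ Tendsto (fun m : ℕ => E (k₀ + m)) atTop (nhds 0) := by

  set T := Matrix.toEuclideanCLM (𝕜 := ℝ) (NormedSpace.exp (τ • A)) with hT
  have key : ∀ m : ℕ, ‖E (k₀ + m)‖ ≤ ‖T‖ ^ m * ‖E k₀‖ := by
    intro m
    induction m with
    | zero => simp
    | succ m ih =>
      have hstep : E (k₀ + m + 1) = T (E (k₀ + m)) := by
        have h := hE (k₀ + m)
        rw [hdet (k₀ + m) (Nat.le_add_right _ _)] at h
        rw [h, div_self]
        · simp
        · rw [← hdet (k₀ + m) (Nat.le_add_right _ _)]; exact hzhat _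
      calc ‖E (k₀ + (m + 1))‖ = ‖T (E (k₀ + m))‖ := by
            rw [show k₀ + (m + 1) = k₀ + m + 1 from rfl, hstep]
        _ ≤ ‖T‖ * ‖E (k₀ + m)‖ := T.le_opNorm _
        _ ≤ ‖T‖ * (‖T‖ ^ m * ‖E k₀‖) := by
            exact mul_le_mul_of_nonneg_left ih (norm_nonneg _)
        _ = ‖T‖ ^ (m + 1) * ‖E k₀‖ := by ring
  refine ⟨key, ?_⟩
  have hlim : Tendsto (fun m : ℕ => ‖T‖ ^ m * ‖E k₀‖) atTop (nhds 0) := by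
    simpa using (tendsto_pow_atTop_nhds_zero_of_lt_one (norm_nonneg _) hnorm).mul_const ‖E k₀‖
  rw [tendsto_zero_iff_norm_tendsto_zero]
  exact squeeze_zero (fun m => norm_nonneg _) key hlim
end

section
/- Consider the one-state algorithm with constant nominal disturbance. Fix σ > 0, levels 0 < ζ₁ < ζ₀, an n×n real matrix A, τ ∈ ℝ, a row vector C ∈ ℝⁿ and vectors M_k ∈ ℝⁿ (k ≥ 1), and let (N_k)_{k≥1} be random variables on a probability space. Suppose the true disturbance is z_k = ζ₀ for all k, and define recursively: X₀ = X̂₀ = 0, Ẑ₋₁ = ζ₀; for k ≥ 1: X_k = exp(τA)·X_{k−1} + (ζ₀/Ẑ_{k−2})·M_k; R_k = C·X_k + N_k; S_k^w = C·exp(τA)·X̂_{k−1} + (w/Ẑ_{k−2})·C·M_k for w ∈ {ζ₀, ζ₁}; Ẑ_{k−1} = ζ₀ if |R_k − S_k^{ζ₀}| ≤ |R_k − S_k^{ζ₁}| and Ẑ_{k−1} = ζ₁ otherwise; X̂_k = exp(τA)·X̂_{k−1} + (Ẑ_{k−1}/Ẑ_{k−2})·M_k. Then for every n ≥ 1, the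 event { Ẑ_{k−1} = ζ₀ for all k = 1, …, n } is equal to the event ⋂_{k=1}^n { |N_k| ≤ |N_k + ((ζ₀−ζ₁)/ζ₀)·C·M_k| }; moreover, on this event X̂_k = X_k for all k = 0, …, n. -/
open Matrix

/-- **One-state algorithm in the pre-failure regime: the event of all-correct detections.**
With constant nominal disturbance `z_k = ζ₀`, the event that the one-state algorithm decides
`Ẑ_{k-1} = ζ₀` for all `k = 1, …, n` equals the event
`⋂_{k=1}^n { |N_k| ≤ |N_k + ((ζ₀-ζ₁)/ζ₀) C·M_k| }`, and on it `X̂_k = X_k` for `k ≤ n`. -/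
theorem one_state_correct_detection_event
    {Ω : Type*} {d : ℕ}
    (σ : ℝ) (hσ : 0 < σ) (ζ₀ ζ₁ : ℝ) (hζ₁ : 0 < ζ₁) (hζ : ζ₁ < ζ₀)
    (A : Matrix (Fin d) (Fin d) ℝ) (τ : ℝ) (C : Fin d → ℝ) (M : ℕ → Fin d → ℝ)
    (N : ℕ → Ω → ℝ)
    (X Xh : ℕ → Ω → Fin d → ℝ) (Zh : ℤ → Ω → ℝ) (R : ℕ → Ω → ℝ) (S : ℕ → ℝ → Ω → ℝ)
    (hX0 : ∀ ω, X 0 ω = 0) (hXh0 : ∀ ω, Xh 0 ω = 0) (hZinit : ∀ ω, Zh (-1) ω = ζ₀)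
    (hX : ∀ (k : ℕ) (ω : Ω),
      X (k + 1) ω = NormedSpace.exp (τ • A) *ᵥ X k ω
        + (ζ₀ / Zh ((k : ℤ) - 1) ω) • M (k + 1))
    (hR : ∀ (k : ℕ) (ω : Ω), R (k + 1) ω = C ⬝ᵥ X (k + 1) ω + N (k + 1) ω)
    (hS : ∀ (k : ℕ) (w : ℝ) (ω : Ω),
      S (k + 1) w ω = C ⬝ᵥ (NormedSpace.exp (τ • A) *ᵥ Xh k ω)
        + (w / Zh ((k : ℤ) - 1) ω) * (C ⬝ᵥ M (k + 1)))
    (hZ : ∀ (k : ℕ) (ω : Ω),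
      Zh (k : ℤ) ω =
        if |R (k + 1) ω - S (k + 1) ζ₀ ω| ≤ |R (k + 1) ω - S (k + 1) ζ₁ ω| then ζ₀ else ζ₁)
    (hXh : ∀ (k : ℕ) (ω : Ω),
      Xh (k + 1) ω = NormedSpace.exp (τ • A) *ᵥ Xh k ω
        + (Zh (k : ℤ) ω / Zh ((k : ℤ) - 1) ω) • M (k + 1))
    (n : ℕ) (hn : 1 ≤ n) :
    ({ω : Ω | ∀ k : ℕ, 1 ≤ k → k ≤ n → Zh ((k : ℤ) - 1) ω = ζ₀}
        = ⋂ k ∈ Finset.Icc 1 n,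
            {ω : Ω | |N k ω| ≤ |N k ω + ((ζ₀ - ζ₁) / ζ₀) * (C ⬝ᵥ M k)|})
      ∧ ∀ ω ∈ {ω : Ω | ∀ k : ℕ, 1 ≤ k → k ≤ n → Zh ((k : ℤ) - 1) ω = ζ₀},
          ∀ k ≤ n, Xh k ω = X k ω := by

  have hζ0pos : (0:ℝ) < ζ₀ := lt_trans hζ₁ hζ
  have hζ0ne : ζ₀ ≠ 0 := ne_of_gt hζ0pos
  have hne : ζ₁ ≠ ζ₀ := ne_of_lt hζ
  have castm : ∀ m : ℕ, ((m+1:ℕ):ℤ) - 1 = (m:ℤ) := by intro m; push_cast; ring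
  -- Lemma A : correct detections so far imply exact state estimate
  have lemA : ∀ (ω : Ω) (m : ℕ),
      (∀ k, 1 ≤ k → k ≤ m → Zh ((k:ℤ)-1) ω = ζ₀) → Xh m ω = X m ω := by
    intro ω m
    induction m with
    | zero => intro _; rw [hXh0, hX0]
    | succ m ih =>
      intro h
      have hm : Xh m ω = X m ω := ih (fun k h1 h2 => h k h1 (le_trans h2 (Nat.le_succ m)))
      have hZm : Zh ((m:ℤ)) ω = ζ₀ := by
        have := h (m+1) (Nat.le_add_left 1 m) le_rfl
        rwa [castm m] at this
      have hZm1 : Zh ((m:ℤ)-1) ω = ζ₀ := by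
        cases m with
        | zero => simpa using hZinit ω
        | succ p => exact h (p+1) (Nat.le_add_left 1 p) (Nat.le_succ _)
      rw [hXh m ω, hX m ω, hm, hZm, hZm1]
  -- difference of signals
  have diff : ∀ (ω : Ω) (m : ℕ) (w : ℝ), Xh m ω = X m ω → Zh ((m:ℤ)-1) ω = ζ₀ →
      R (m+1) ω - S (m+1) w ω = N (m+1) ω + ((ζ₀ - w)/ζ₀) * (C ⬝ᵥ M (m+1)) := by
    intro ω m w hXm hZ1
    rw [hR, hS, hX, hXm, hZ1, dotProduct_add, dotProduct_smul, smul_eq_mul]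
    field_simp
    ring
  -- Lemma B : equivalence for one detection step
  have lemB : ∀ (ω : Ω) (m : ℕ), Xh m ω = X m ω → Zh ((m:ℤ)-1) ω = ζ₀ →
      (Zh (m:ℤ) ω = ζ₀ ↔
        |N (m+1) ω| ≤ |N (m+1) ω + ((ζ₀-ζ₁)/ζ₀) * (C ⬝ᵥ M (m+1))|) := by
    intro ω m hXm hZ1
    have d0 := diff ω m ζ₀ hXm hZ1
    have d1 := diff ω m ζ₁ hXm hZ1
    rw [sub_self, zero_div, zero_mul, add_zero] at d0
    rw [hZ m ω, d0, d1]
    by_cases hc : |N (m+1) ω| ≤ |N (m+1) ω + ((ζ₀-ζ₁)/ζ₀) * (C ⬝ᵥ M (m+1))|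
    · simp [hc]
    · simp [hc, hne]
  have hZ1gen : ∀ (ω : Ω) (m : ℕ),
      (∀ k, 1 ≤ k → k ≤ m → Zh ((k:ℤ)-1) ω = ζ₀) → Zh ((m:ℤ)-1) ω = ζ₀ := by
    intro ω m h
    cases m with
    | zero => simpa using hZinit ω
    | succ p => exact h (p+1) (Nat.le_add_left 1 p) le_rfl
  -- backward direction by induction
  have key : ∀ ω, (∀ k, 1 ≤ k → k ≤ n → |N k ω| ≤ |N k ω + ((ζ₀-ζ₁)/ζ₀) * (C ⬝ᵥ M k)|) →
      ∀ m, m ≤ n → ∀ k, 1 ≤ k → k ≤ m → Zh ((k:ℤ)-1) ω = ζ₀ := by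
    intro ω hN m
    induction m with
    | zero => intro _ k h1 h2; omega
    | succ m ih =>
      intro hmn k h1 h2
      have ihm := ih (le_trans (Nat.le_succ m) hmn)
      rcases Nat.lt_or_ge k (m+1) with h | h
      · exact ihm k h1 (by omega)
      · have hk : k = m+1 := by omega
        subst hk
        have hXm := lemA ω m ihm
        have hZ1 := hZ1gen ω m ihm
        have hc := (lemB ω m hXm hZ1).2 (hN (m+1) (by omega) hmn)
        rwa [castm m]
  constructor
  · ext ω
    simp only [Set.mem_setOf_eq, Set.mem_iInter, Finset.mem_Icc, and_imp]
    constructor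
    · intro h k h1 h2
      obtain ⟨m, rfl⟩ : ∃ m, k = m+1 := ⟨k-1, by omega⟩
      have hall : ∀ j, 1 ≤ j → j ≤ m → Zh ((j:ℤ)-1) ω = ζ₀ :=
        fun j hj1 hj2 => h j hj1 (by omega)
      have hXm := lemA ω m hall
      have hZ1 := hZ1gen ω m hall
      have hZm : Zh ((m:ℤ)) ω = ζ₀ := by
        have := h (m+1) h1 h2; rwa [castm m] at this
      exact (lemB ω m hXm hZ1).1 hZm
    · intro h k h1 h2
      exact key ω (fun j hj1 hj2 => h j hj1 hj2) n le_rfl k h1 h2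
  · intro ω hω k hk
    exact lemA ω k (fun j hj1 hj2 => hω j hj1 (le_trans hj2 hk))
end

section
/- Consider the one-state algorithm with constant nominal disturbance, as follows. Fix σ > 0, levels 0 < ζ₁ < ζ₀, an n×n real matrix A, τ ∈ ℝ, a row vector C ∈ ℝⁿ and vectors M_k ∈ ℝⁿ with C·M_k ≠ 0 (k ≥ 1), and let (N_k)_{k≥1} be an independent family of random variables on a probability space, each distributed according to the Gaussian measure with mean 0 and variance σ². Suppose the true disturbance is z_k = ζ₀ for all k, and define recursively: X₀ = X̂₀ = 0, Ẑ₋₁ = ζ₀; for k ≥ 1: X_k = exp(τA)·X_{k−1} + (ζ₀/Ẑ_{k−2})·M_k; R_k = C·X_k + N_k; S_k^w = C·exp(τA)·X̂_{k−1} + (w/Ẑ_{k−2})·C·M_k for w ∈ {ζ₀, ζ₁}; Ẑ_{k−1} = ζ₀ if |R_k − S_k^{ζ₀}| ≤ |R_k − S_k^{ζ₁}| and Ẑ_{k−1} = ζ₁ otherwise; X̂_k = exp(τA)·X̂_{k−1} + (Ẑ_{k−1}/Ẑ_{k−2})·M_k. Then for every n ≥ 1, the probability that Ẑ_{k−1}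 = ζ₀ for all k = 1, …, n equals ∏_{k=1}^n (1/2)·erfc( −| (ζ₀ − ζ₁)/(2ζ₀) · C·M_k | / (σ·√2) ). (This is the probability that no false positive occurs during the first n steps of the pre-failure regime, i.e., the paper's EDP^{n}(1, 0, ζ₀, ζ₀).) -/
open Matrix MeasureTheory ProbabilityTheory Set Real

/-- The complementary error function `erfc x = (2/√π) ∫_x^∞ e^{-t²} dt`. -/
noncomputable def erfc (x : ℝ) : ℝ :=
  (2 / Real.sqrt Real.pi) * ∫ t in Set.Ioi x, Real.exp (-(t ^ 2))

lemma gpdf_integral_Ioi (σ : ℝ) (hσ : 0 < σ) (a : ℝ) :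
    ∫ x in Ioi a, gaussianPDFReal 0 ⟨σ ^ 2, sq_nonneg σ⟩ x
      = (1 / 2) * erfc (a / (σ * Real.sqrt 2)) := by
  have h2 : (0:ℝ) < Real.sqrt 2 := Real.sqrt_pos.mpr (by norm_num)
  have hb : (0:ℝ) < σ * Real.sqrt 2 := mul_pos hσ h2
  have key := MeasureTheory.integral_comp_mul_left_Ioi
    (fun x => gaussianPDFReal 0 ⟨σ ^ 2, sq_nonneg σ⟩ x) (a / (σ * Real.sqrt 2)) hb
  have ha : (σ * Real.sqrt 2) * (a / (σ * Real.sqrt 2)) = a := by field_simp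
  rw [ha] at key
  have hpdf : ∀ t : ℝ, gaussianPDFReal 0 ⟨σ ^ 2, sq_nonneg σ⟩ ((σ * Real.sqrt 2) * t)
      = (σ * Real.sqrt (2 * Real.pi))⁻¹ * Real.exp (-(t ^ 2)) := by
    intro t
    show (√(2 * π * ((⟨σ ^ 2, sq_nonneg σ⟩ : NNReal) : ℝ)))⁻¹ * Real.exp (-((σ * √2 * t) - 0) ^ 2 / (2 * ((⟨σ ^ 2, sq_nonneg σ⟩ : NNReal) : ℝ))) = _
    simp only [NNReal.coe_mk]
    congr 1
    · rw [show 2 * Real.pi * σ ^ 2 = (2 * Real.pi) * σ ^ 2 by ring,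
        Real.sqrt_mul (by positivity), Real.sqrt_sq hσ.le, mul_comm]
    · congr 1
      have : (Real.sqrt 2) ^ 2 = 2 := Real.sq_sqrt (by norm_num)
      field_simp
      nlinarith [this]
  simp only [hpdf] at key
  rw [MeasureTheory.integral_const_mul] at key
  have hJ : ∫ x in Ioi a, gaussianPDFReal 0 ⟨σ ^ 2, sq_nonneg σ⟩ x
      = (σ * Real.sqrt 2) * ((σ * Real.sqrt (2 * Real.pi))⁻¹
          * ∫ t in Ioi (a / (σ * Real.sqrt 2)), Real.exp (-(t ^ 2))) := by
    rw [key, smul_eq_mul, ← mul_assoc, mul_inv_cancel₀ hb.ne', one_mul]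
  rw [hJ, erfc]
  have hpi : Real.sqrt (2 * Real.pi) = Real.sqrt 2 * Real.sqrt Real.pi :=
    Real.sqrt_mul (by norm_num) _
  have hπ : (0:ℝ) < Real.sqrt Real.pi := Real.sqrt_pos.mpr Real.pi_pos
  rw [hpi]
  field_simp
lemma gauss_Ici (σ : ℝ) (hσ : 0 < σ) (a : ℝ) :
    gaussianReal 0 ⟨σ ^ 2, sq_nonneg σ⟩ (Set.Ici a)
      = ENNReal.ofReal ((1 / 2) * erfc (a / (σ * Real.sqrt 2))) := by
  have hv : (⟨σ ^ 2, sq_nonneg σ⟩ : NNReal) ≠ 0 :=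
    fun h => (pow_pos hσ 2).ne' (congrArg NNReal.toReal h)
  rw [gaussianReal_apply_eq_integral 0 hv, MeasureTheory.integral_Ici_eq_integral_Ioi,
    gpdf_integral_Ioi σ hσ a]

lemma gauss_Iic (σ : ℝ) (hσ : 0 < σ) (c : ℝ) :
    gaussianReal 0 ⟨σ ^ 2, sq_nonneg σ⟩ (Set.Iic c)
      = ENNReal.ofReal ((1 / 2) * erfc (-c / (σ * Real.sqrt 2))) := by
  have hv : (⟨σ ^ 2, sq_nonneg σ⟩ : NNReal) ≠ 0 :=
    fun h => (pow_pos hσ 2).ne' (congrArg NNReal.toReal h)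
  rw [gaussianReal_apply_eq_integral 0 hv]
  have heven : ∀ x : ℝ, gaussianPDFReal 0 ⟨σ ^ 2, sq_nonneg σ⟩ (-x)
      = gaussianPDFReal 0 ⟨σ ^ 2, sq_nonneg σ⟩ x := by
    intro x; unfold gaussianPDFReal; ring_nf
  have hneg := integral_comp_neg_Ioi (-c)
    (fun x => gaussianPDFReal 0 ⟨σ ^ 2, sq_nonneg σ⟩ x)
  simp only [heven, neg_neg] at hneg
  rw [← hneg, gpdf_integral_Ioi σ hσ (-c)]

lemma setB_pos {δ : ℝ} (hδ : 0 < δ) : {x : ℝ | |x| ≤ |x + δ|} = Set.Ici (-(δ / 2)) := by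
  ext x
  simp only [Set.mem_setOf_eq, Set.mem_Ici, ← sq_le_sq]
  constructor <;> intro h <;> nlinarith

lemma setB_neg {δ : ℝ} (hδ : δ < 0) : {x : ℝ | |x| ≤ |x + δ|} = Set.Iic (-(δ / 2)) := by
  ext x
  simp only [Set.mem_setOf_eq, Set.mem_Iic, ← sq_le_sq]
  constructor <;> intro h <;> nlinarith

lemma gauss_B (σ : ℝ) (hσ : 0 < σ) {δ : ℝ} (hδ : δ ≠ 0) :
    gaussianReal 0 ⟨σ ^ 2, sq_nonneg σ⟩ {x : ℝ | |x| ≤ |x + δ|}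
      = ENNReal.ofReal ((1 / 2) * erfc (-|δ / 2| / (σ * Real.sqrt 2))) := by
  rcases hδ.lt_or_gt with h | h
  · rw [setB_neg h, gauss_Iic σ hσ]
    have : |δ / 2| = -(δ / 2) := abs_of_neg (by linarith)
    rw [this, neg_neg]
  · rw [setB_pos h, gauss_Ici σ hσ]
    have : |δ / 2| = δ / 2 := abs_of_pos (by linarith)
    rw [this]


/-- **Probability of no false positives in the pre-failure regime (the paper's
`EDP^n(1, 0, ζ₀, ζ₀)`).** With constant nominal disturbance `z_k = ζ₀` and independent
Gaussian lecture noises of variance `σ²`, the probability that the one-state algorithm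
decides `Ẑ_{k-1} = ζ₀` for all `k = 1, …, n` equals
`∏_{k=1}^n (1/2) erfc (-|(ζ₀-ζ₁)/(2ζ₀) · C·M_k| / (σ √2))`. -/
theorem one_state_no_false_positive_prob
    {Ω : Type*} [MeasurableSpace Ω] (P : Measure Ω) [IsProbabilityMeasure P]
    {d : ℕ}
    (σ : ℝ) (hσ : 0 < σ) (ζ₀ ζ₁ : ℝ) (hζ₁ : 0 < ζ₁) (hζ : ζ₁ < ζ₀)
    (A : Matrix (Fin d) (Fin d) ℝ) (τ : ℝ) (C : Fin d → ℝ) (M : ℕ → Fin d → ℝ)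
    (hM : ∀ k : ℕ, 1 ≤ k → C ⬝ᵥ M k ≠ 0)
    (N : ℕ → Ω → ℝ)
    (hmeas : ∀ k, Measurable (N k))
    (hindep : iIndepFun N P)
    (hdist : ∀ k, P.map (N k) = gaussianReal 0 ⟨σ ^ 2, sq_nonneg σ⟩)
    (X Xh : ℕ → Ω → Fin d → ℝ) (Zh : ℤ → Ω → ℝ) (R : ℕ → Ω → ℝ) (S : ℕ → ℝ → Ω → ℝ)
    (hX0 : ∀ ω, X 0 ω = 0) (hXh0 : ∀ ω, Xh 0 ω = 0) (hZinit : ∀ ω, Zh (-1) ω = ζ₀)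
    (hX : ∀ (k : ℕ) (ω : Ω),
      X (k + 1) ω = NormedSpace.exp (τ • A) *ᵥ X k ω
        + (ζ₀ / Zh ((k : ℤ) - 1) ω) • M (k + 1))
    (hR : ∀ (k : ℕ) (ω : Ω), R (k + 1) ω = C ⬝ᵥ X (k + 1) ω + N (k + 1) ω)
    (hS : ∀ (k : ℕ) (w : ℝ) (ω : Ω),
      S (k + 1) w ω = C ⬝ᵥ (NormedSpace.exp (τ • A) *ᵥ Xh k ω)
        + (w / Zh ((k : ℤ) - 1) ω) * (C ⬝ᵥ M (k + 1)))
    (hZ : ∀ (k : ℕ) (ω : Ω),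
      Zh (k : ℤ) ω =
        if |R (k + 1) ω - S (k + 1) ζ₀ ω| ≤ |R (k + 1) ω - S (k + 1) ζ₁ ω| then ζ₀ else ζ₁)
    (hXh : ∀ (k : ℕ) (ω : Ω),
      Xh (k + 1) ω = NormedSpace.exp (τ • A) *ᵥ Xh k ω
        + (Zh (k : ℤ) ω / Zh ((k : ℤ) - 1) ω) • M (k + 1))
    (n : ℕ) (hn : 1 ≤ n) :
    P {ω : Ω | ∀ k : ℕ, 1 ≤ k → k ≤ n → Zh ((k : ℤ) - 1) ω = ζ₀}
      = ∏ k ∈ Finset.Icc 1 n,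
          ENNReal.ofReal ((1 / 2) *
            erfc (-|((ζ₀ - ζ₁) / (2 * ζ₀)) * (C ⬝ᵥ M k)| / (σ * Real.sqrt 2))) := by
  have hζ₀ : 0 < ζ₀ := hζ₁.trans hζ
  set δf : ℕ → ℝ := fun k => ((ζ₀ - ζ₁) / ζ₀) * (C ⬝ᵥ M k) with hδf
  have hδne : ∀ k : ℕ, 1 ≤ k → δf k ≠ 0 := fun k hk =>
    mul_ne_zero (div_ne_zero (sub_ne_zero.mpr hζ.ne') hζ₀.ne') (hM k hk)
  set B : ℕ → Set ℝ := fun k => {x : ℝ | |x| ≤ |x + δf k|} with hB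
  have hcast : ∀ m : ℕ, (((m + 1 : ℕ) : ℤ)) - 1 = (m : ℤ) := by intro m; push_cast; ring
  -- previous decision is ζ₀
  have hZprev : ∀ (ω : Ω) (m : ℕ), (∀ j : ℕ, 1 ≤ j → j ≤ m → Zh ((j : ℤ) - 1) ω = ζ₀) →
      Zh ((m : ℤ) - 1) ω = ζ₀ := by
    intro ω m h
    cases m with
    | zero => simpa using hZinit ω
    | succ k => exact h (k + 1) (Nat.succ_le_succ (Nat.zero_le k)) le_rfl
  -- estimate matches state under correct decisions
  have hXeq : ∀ (ω : Ω) (m : ℕ), (∀ j : ℕ, 1 ≤ j → j ≤ m → Zh ((j : ℤ) - 1) ω = ζ₀) →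
      Xh m ω = X m ω := by
    intro ω m
    induction m with
    | zero => intro _; rw [hXh0, hX0]
    | succ k ih =>
      intro h
      have hpre : ∀ j : ℕ, 1 ≤ j → j ≤ k → Zh ((j : ℤ) - 1) ω = ζ₀ :=
        fun j h1 h2 => h j h1 (h2.trans (Nat.le_succ k))
      have hk1 : Zh ((k : ℤ) - 1) ω = ζ₀ := hZprev ω k hpre
      have hk0 : Zh (k : ℤ) ω = ζ₀ := by
        have := h (k + 1) (Nat.succ_le_succ (Nat.zero_le k)) le_rfl
        rwa [hcast k] at this
      rw [hXh k ω, hX k ω, ih hpre, hk1, hk0]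
  -- decision at step m+1
  have hdec : ∀ (ω : Ω) (m : ℕ), Zh ((m : ℤ) - 1) ω = ζ₀ → Xh m ω = X m ω →
      (Zh (m : ℤ) ω = ζ₀ ↔ N (m + 1) ω ∈ B (m + 1)) := by
    intro ω m hzp hxe
    have hR0 : R (m + 1) ω - S (m + 1) ζ₀ ω = N (m + 1) ω := by
      rw [hR m ω, hS m ζ₀ ω, hX m ω, hxe, hzp]
      simp only [dotProduct_add, dotProduct_smul, smul_eq_mul]
      ring
    have hR1 : R (m + 1) ω - S (m + 1) ζ₁ ω = N (m + 1) ω + δf (m + 1) := by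
      rw [hR m ω, hS m ζ₁ ω, hX m ω, hxe, hzp, hδf]
      simp only [dotProduct_add, dotProduct_smul, smul_eq_mul]
      field_simp
      ring
    rw [hZ m ω, hR0, hR1]
    simp only [hB, Set.mem_setOf_eq]
    constructor
    · intro hcond
      by_contra hmem
      rw [if_neg hmem] at hcond
      exact hζ.ne hcond
    · intro hmem
      rw [if_pos hmem]
  -- main equivalence
  have main : ∀ (ω : Ω) (m : ℕ),
      (∀ j : ℕ, 1 ≤ j → j ≤ m → Zh ((j : ℤ) - 1) ω = ζ₀)
        ↔ (∀ j : ℕ, 1 ≤ j → j ≤ m → N j ω ∈ B j) := by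
    intro ω m
    induction m with
    | zero => constructor <;> (intro _ j h1 h2; omega)
    | succ k ih =>
      constructor
      · intro h j h1 h2
        rcases eq_or_lt_of_le h2 with heq | hlt
        · subst heq
          have hpre : ∀ j : ℕ, 1 ≤ j → j ≤ k → Zh ((j : ℤ) - 1) ω = ζ₀ :=
            fun j h1 h2 => h j h1 (h2.trans (Nat.le_succ k))
          have hk0 : Zh (k : ℤ) ω = ζ₀ := by
            have := h (k + 1) (Nat.succ_le_succ (Nat.zero_le k)) le_rfl
            rwa [hcast k] at this
          exact (hdec ω k (hZprev ω k hpre) (hXeq ω k hpre)).mp hk0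
        · exact ih.mp (fun j h1 h2 => h j h1 (h2.trans (Nat.le_succ k))) j h1
            (Nat.lt_succ_iff.mp hlt)
      · intro h j h1 h2
        have hpreN : ∀ j : ℕ, 1 ≤ j → j ≤ k → N j ω ∈ B j :=
          fun j h1 h2 => h j h1 (h2.trans (Nat.le_succ k))
        have hpreZ := ih.mpr hpreN
        rcases eq_or_lt_of_le h2 with heq | hlt
        · subst heq
          rw [hcast k]
          exact (hdec ω k (hZprev ω k hpreZ) (hXeq ω k hpreZ)).mpr
            (h (k + 1) (Nat.succ_le_succ (Nat.zero_le k)) le_rfl)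
        · exact hpreZ j h1 (Nat.lt_succ_iff.mp hlt)
  -- rewrite the event
  have hBmeas : ∀ k, MeasurableSet (B k) := fun k =>
    measurableSet_le measurable_abs ((measurable_id.add_const _).abs)
  have hset : {ω : Ω | ∀ k : ℕ, 1 ≤ k → k ≤ n → Zh ((k : ℤ) - 1) ω = ζ₀}
      = ⋂ k ∈ Finset.Icc 1 n, N k ⁻¹' B k := by
    ext ω
    simp only [Set.mem_setOf_eq, Set.mem_iInter, Finset.mem_Icc, Set.mem_preimage]
    constructor
    · intro h k hk
      exact (main ω n).mp h k hk.1 hk.2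
    · intro h
      exact (main ω n).mpr (fun j h1 h2 => h j ⟨h1, h2⟩)
  rw [hset, hindep.meas_biInter (fun k _ => ⟨B k, hBmeas k, rfl⟩)]
  refine Finset.prod_congr rfl (fun k hk => ?_)
  rw [Finset.mem_Icc] at hk
  rw [← Measure.map_apply (hmeas k) (hBmeas k), hdist k]
  have := gauss_B σ hσ (hδne k hk.1)
  simp only [hB]
  rw [this]
  congr 3
  rw [hδf]
  congr 1
  ring
end
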